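/- Let $S=k[x_0,x_1]$ be the polynomial ring in two variables over a field $k$, graded by total degree, and let $n\ge 1$. Consider the graded $S$-module map $\operatorname{can}: S_n\otimes_k S(-n)\to S$ sending the generator corresponding to a degree-$n$ monomial $m$ to $m$. Then the kernel of $\operatorname{can}$ is generated as an $S$-module by the degree $n+1$ elements $u_i\otimes x_0 - u_{i+1}\otimes x_1$ for $0\le i<n$, where $u_i$ denotes the basis element $x_0^i x_1^{n-i}$ of $S_n$. -/

import Mathlib

open MvPolynomial

noncomputable section

def canMap (k : Type*) [Field k] (n : ℕ) :
    (Fin (n + 1) → MvPolynomial (Fin 2) k) →ₗ[MvPolynomial (Fin 2) k]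
      MvPolynomial (Fin 2) k where
  toFun f := ∑ i : Fin (n + 1), f i * (X 0 : MvPolynomial (Fin 2) k) ^ (i : ℕ) * X 1 ^ (n - (i : ℕ))
  map_add' f g := by
    simp [add_mul, Finset.sum_add_distrib]
  map_smul' c f := by
    simp [Finset.mul_sum, smul_eq_mul, mul_assoc]

section Aux

variable {k : Type*} [Field k] {n : ℕ}

/-- the generators -/
def genVec (k : Type*) [Field k] (n : ℕ) (i : Fin n) : Fin (n + 1) → MvPolynomial (Fin 2) k :=
  fun j : Fin (n + 1) =>
    (if (j : ℕ) = (i : ℕ) then (X 0 : MvPolynomial (Fin 2) k) else 0) -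
    (if (j : ℕ) = (i : ℕ) + 1 then (X 1 : MvPolynomial (Fin 2) k) else 0)

lemma canMap_apply (f : Fin (n + 1) → MvPolynomial (Fin 2) k) :
    canMap k n f = ∑ i : Fin (n + 1), f i * (X 0 : MvPolynomial (Fin 2) k) ^ (i : ℕ) * X 1 ^ (n - (i : ℕ)) := rfl

lemma sum_ite_val (c : ℕ) (hc : c < n + 1) (F : Fin (n + 1) → MvPolynomial (Fin 2) k) :
    (∑ j : Fin (n + 1), if (j : ℕ) = c then F j else 0) = F ⟨c, hc⟩ := by
  rw [Finset.sum_eq_single (⟨c, hc⟩ : Fin (n + 1))]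
  · simp
  · intro b _ hb
    have : (b : ℕ) ≠ c := fun h => hb (Fin.ext h)
    simp [this]
  · simp

lemma canMap_genVec (i : Fin n) : canMap k n (genVec k n i) = 0 := by
  rw [canMap_apply]
  have hi : (i : ℕ) < n + 1 := by omega
  have hi1 : (i : ℕ) + 1 < n + 1 := by omega
  simp only [genVec, sub_mul, ite_mul, zero_mul, Finset.sum_sub_distrib]
  rw [sum_ite_val (i : ℕ) hi, sum_ite_val ((i : ℕ) + 1) hi1]
  have h : n - (i : ℕ) = (n - ((i : ℕ) + 1)) + 1 := by omega
  rw [h]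
  ring

lemma primeX0 : Prime (X 0 : MvPolynomial (Fin 2) k) := by
  rw [← MulEquiv.prime_iff (MvPolynomial.finSuccEquiv k 1).toMulEquiv]
  simpa [finSuccEquiv_X_zero] using Polynomial.prime_X

lemma X0_not_dvd_X1 : ¬ (X 0 : MvPolynomial (Fin 2) k) ∣ X 1 := by
  intro h
  have := map_dvd (eval (fun j : Fin 2 => if j = 0 then (0 : k) else 1)) h
  simp at this

set_option maxHeartbeats 800000 in
lemma key (m : ℕ) (f : Fin (n + 1) → MvPolynomial (Fin 2) k)
    (hf : canMap k n f = 0)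
    (hz : ∀ j : Fin (n + 1), (j : ℕ) < n - m → f j = 0) :
    f ∈ Submodule.span (MvPolynomial (Fin 2) k)
      {v : Fin (n + 1) → MvPolynomial (Fin 2) k | ∃ i : Fin n, v = genVec k n i} := by
  induction m generalizing f with
  | zero =>
    -- only f n can be nonzero; show f = 0
    have hlast : f ⟨n, by omega⟩ = 0 := by
      have hs : ∑ j : Fin (n+1), f j * (X 0 : MvPolynomial (Fin 2) k) ^ (j:ℕ) * X 1 ^ (n - (j:ℕ)) = 0 := hf
      rw [Finset.sum_eq_single (⟨n, by omega⟩ : Fin (n+1))] at hs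
      · have hX : ((X 0 : MvPolynomial (Fin 2) k)) ^ n ≠ 0 := pow_ne_zero _ (X_ne_zero 0)
        simpa [hX] using hs
      · intro b _ hb
        have : (b : ℕ) < n := by
          have := b.isLt
          have hbn : (b : ℕ) ≠ n := fun h => hb (Fin.ext h)
          omega
        rw [hz b (by omega)]
        ring
      · simp
    have : f = 0 := by
      funext j
      rcases lt_or_eq_of_le (Nat.lt_succ_iff.mp j.isLt) with h | h
      · exact hz j (by omega)
      · have : j = (⟨n, by omega⟩ : Fin (n+1)) := Fin.ext h
        rw [this]; exact hlast
    rw [this]; exact Submodule.zero_mem _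
  | succ m ih =>
    by_cases hmn : n ≤ m
    · exact ih f hf (fun j hj => hz j (by omega))
    -- m < n, set t = n - (m+1) < n
    set t : ℕ := n - (m + 1) with ht
    have htn : t < n := by omega
    have htn1 : t < n + 1 := by omega
    have hsum : ∑ j : Fin (n+1), f j * (X 0 : MvPolynomial (Fin 2) k) ^ (j:ℕ) * X 1 ^ (n - (j:ℕ)) = 0 := hf
    rw [← Finset.add_sum_erase _ _ (Finset.mem_univ (⟨t, htn1⟩ : Fin (n+1)))] at hsum
    have hdvd : (X 0 : MvPolynomial (Fin 2) k) ^ (t + 1) ∣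
        ∑ j ∈ Finset.univ.erase (⟨t, htn1⟩ : Fin (n+1)),
          f j * (X 0 : MvPolynomial (Fin 2) k) ^ (j:ℕ) * X 1 ^ (n - (j:ℕ)) := by
      apply Finset.dvd_sum
      intro j hj
      have hjt : (j : ℕ) ≠ t := fun h => (Finset.ne_of_mem_erase hj) (Fin.ext h)
      rcases lt_or_gt_of_ne hjt with h | h
      · rw [hz j (by omega)]
        simp
      · exact ((pow_dvd_pow (X 0 : MvPolynomial (Fin 2) k) (by omega : t + 1 ≤ (j:ℕ))).mul_left (f j)).mul_right _
    have hdvd2 : (X 0 : MvPolynomial (Fin 2) k) ^ (t + 1) ∣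
        f ⟨t, htn1⟩ * (X 0 : MvPolynomial (Fin 2) k) ^ t * X 1 ^ (n - t) := by
      have : f ⟨t, htn1⟩ * (X 0 : MvPolynomial (Fin 2) k) ^ t * X 1 ^ (n - t) =
          -∑ j ∈ Finset.univ.erase (⟨t, htn1⟩ : Fin (n+1)),
            f j * (X 0 : MvPolynomial (Fin 2) k) ^ (j:ℕ) * X 1 ^ (n - (j:ℕ)) := by
        exact eq_neg_of_add_eq_zero_left hsum
      rw [this]
      exact dvd_neg.mpr hdvd
    -- extract X 0 ∣ f t
    have hXdvd : (X 0 : MvPolynomial (Fin 2) k) ∣ f ⟨t, htn1⟩ := by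
      have h1 : (X 0 : MvPolynomial (Fin 2) k) ^ t * (X 0) ∣
          (X 0 : MvPolynomial (Fin 2) k) ^ t * (f ⟨t, htn1⟩ * X 1 ^ (n - t)) := by
        rw [← pow_succ]
        have : (X 0 : MvPolynomial (Fin 2) k) ^ t * (f ⟨t, htn1⟩ * X 1 ^ (n - t)) =
            f ⟨t, htn1⟩ * (X 0 : MvPolynomial (Fin 2) k) ^ t * X 1 ^ (n - t) := by ring
        rw [this]
        exact hdvd2
      have h2 : (X 0 : MvPolynomial (Fin 2) k) ∣ f ⟨t, htn1⟩ * X 1 ^ (n - t) :=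
        (mul_dvd_mul_iff_left (pow_ne_zero t (X_ne_zero 0))).mp h1
      rcases primeX0.2.2 _ _ h2 with h | h
      · exact h
      · exact absurd (primeX0.dvd_of_dvd_pow h) X0_not_dvd_X1
    obtain ⟨h, hh⟩ := hXdvd
    set i₀ : Fin n := ⟨t, htn⟩ with hi₀
    set g : Fin (n + 1) → MvPolynomial (Fin 2) k := genVec k n i₀ with hg
    have hker' : canMap k n (f - h • g) = 0 := by
      rw [map_sub, map_smul, hf, hg, canMap_genVec]
      simp
    have hz' : ∀ j : Fin (n + 1), (j : ℕ) < n - m → (f - h • g) j = 0 := by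
      intro j hj
      have hjle : (j : ℕ) ≤ t := by omega
      simp only [Pi.sub_apply, Pi.smul_apply, smul_eq_mul]
      rcases lt_or_eq_of_le hjle with hlt | heq
      · rw [hz j (by omega)]
        have h1 : (j : ℕ) ≠ (i₀ : ℕ) := by simp [hi₀]; omega
        have h2 : (j : ℕ) ≠ (i₀ : ℕ) + 1 := by simp [hi₀]; omega
        simp [hg, genVec, h1, h2]
      · have hje : j = (⟨t, htn1⟩ : Fin (n + 1)) := Fin.ext heq
        rw [hje, hh]
        have h1 : ((⟨t, htn1⟩ : Fin (n+1)) : ℕ) = (i₀ : ℕ) := by simp [hi₀]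
        have h2 : ((⟨t, htn1⟩ : Fin (n+1)) : ℕ) ≠ (i₀ : ℕ) + 1 := by simp [hi₀]
        simp [hg, genVec, h1, h2, hi₀]
        ring
    have hf' := ih (f - h • g) hker' hz'
    have hgmem : g ∈ Submodule.span (MvPolynomial (Fin 2) k)
        {v : Fin (n + 1) → MvPolynomial (Fin 2) k | ∃ i : Fin n, v = genVec k n i} :=
      Submodule.subset_span ⟨i₀, rfl⟩
    have : f = (f - h • g) + h • g := by ring
    rw [this]
    exact Submodule.add_mem _ hf' (Submodule.smul_mem _ _ hgmem)

end Aux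

theorem kernel_of_can_generated (k : Type*) [Field k] (n : ℕ) (hn : 1 ≤ n) :
    LinearMap.ker (canMap k n) =
      Submodule.span (MvPolynomial (Fin 2) k)
        {v : Fin (n + 1) → MvPolynomial (Fin 2) k | ∃ i : Fin n,
          v = fun j : Fin (n + 1) =>
            (if (j : ℕ) = (i : ℕ) then (X 0 : MvPolynomial (Fin 2) k) else 0) -
            (if (j : ℕ) = (i : ℕ) + 1 then (X 1 : MvPolynomial (Fin 2) k) else 0)} := by
  have hset : {v : Fin (n + 1) → MvPolynomial (Fin 2) k | ∃ i : Fin n,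
          v = fun j : Fin (n + 1) =>
            (if (j : ℕ) = (i : ℕ) then (X 0 : MvPolynomial (Fin 2) k) else 0) -
            (if (j : ℕ) = (i : ℕ) + 1 then (X 1 : MvPolynomial (Fin 2) k) else 0)} =
      {v : Fin (n + 1) → MvPolynomial (Fin 2) k | ∃ i : Fin n, v = genVec k n i} := rfl
  rw [hset]
  apply le_antisymm
  · intro f hf
    exact key n f (LinearMap.mem_ker.mp hf) (fun j hj => absurd hj (by omega))
  · rw [Submodule.span_le]
    rintro v ⟨i, rfl⟩
    exact LinearMap.mem_ker.mpr (canMap_genVec i)
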